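/- arXiv:1107.0537 — 4 statements merged into one kernel-verified Lean document; each statement's English description precedes it below -/
import Mathlib

section
/- Let 1 ≤ ℓ ≤ ℓ', let R, J be the ring and ideal built from ℓ sets of n variables and R', J' those built from ℓ' sets of n variables. For every d ∈ ℕ^ℓ, the dimension over ℚ of the multidegree-d component of R/J equals the dimension over ℚ of the multidegree-(d_1,…,d_ℓ,0,…,0) component of R'/J'. In other words, the multigraded Hilbert function of the diagonal co-quasi-invariant space of G(r,n) is stable under increasing the number ℓ of sets of variables. -/
open scoped Classical

noncomputable section

/-- The polynomial ring `ℚ[x_{ij} : 1 ≤ i ≤ ℓ, 1 ≤ j ≤ n]`. -/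
abbrev PolyR (ℓ n : ℕ) : Type := MvPolynomial (Fin ℓ × Fin n) ℚ

/-- The monomial quasi-invariant `M_A` attached to a matrix `A` given as a list of columns
(each column a function `Fin ℓ → ℕ`): the sum over all strictly increasing choices of
columns of variables of the corresponding product of powers. -/
noncomputable def Mlist (n : ℕ) {ℓ : ℕ} (A : List (Fin ℓ → ℕ)) : PolyR ℓ n :=
  ∑ s ∈ Finset.univ.filter (fun s : Fin A.length → Fin n => StrictMono s),
    ∏ c : Fin A.length, ∏ i : Fin ℓ, MvPolynomial.X (i, s c) ^ (A.get c i)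

/-- `A` (a list of columns) is an `r`-composition-matrix: it is nonempty and each column sum
is a positive multiple of `r`. -/
def IsRCompList (r : ℕ) {ℓ : ℕ} (A : List (Fin ℓ → ℕ)) : Prop :=
  A ≠ [] ∧ ∀ V ∈ A, (∑ i, V i) ≠ 0 ∧ r ∣ (∑ i, V i)

/-- The ideal `J` generated by the monomial quasi-invariants `M_A`, for `A` an
`r`-composition-matrix with `ℓ` rows and at most `n` columns. -/
noncomputable def Jdeal (r n ℓ : ℕ) : Ideal (PolyR ℓ n) :=
  Ideal.span {f | ∃ A : List (Fin ℓ → ℕ), IsRCompList r A ∧ A.length ≤ n ∧ f = Mlist n A}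

/-- The submodule of polynomials that are multihomogeneous of multidegree `d ∈ ℕ^ℓ`
(total degree `d i` in the `i`-th row of variables). -/
noncomputable def homogComp (ℓ n : ℕ) (d : Fin ℓ → ℕ) : Submodule ℚ (PolyR ℓ n) :=
  MvPolynomial.weightedHomogeneousSubmodule ℚ (fun p : Fin ℓ × Fin n => Pi.single p.1 1) d

/-- The dimension over `ℚ` of the multidegree-`d` component of `R/J`, i.e. of the image of
the multihomogeneous component of degree `d` in the quotient by the ideal `J`. -/
noncomputable def compDim (r n ℓ : ℕ) (d : Fin ℓ → ℕ) : ℕ :=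
  Module.finrank ℚ
    ↥((homogComp ℓ n d).map (Ideal.Quotient.mkₐ ℚ (Jdeal r n ℓ)).toLinearMap)

namespace Stmt3Aux

open MvPolynomial

variable {n ℓ ℓ' : ℕ}

/-- The weight function defining the multigrading. -/
abbrev Wt (ℓ n : ℕ) : Fin ℓ × Fin n → (Fin ℓ → ℕ) := fun p => Pi.single p.1 1

/-- Extension of a vector by zeros. -/
def extv (h : ℓ ≤ ℓ') (V : Fin ℓ → ℕ) : Fin ℓ' → ℕ :=
  fun i => if hi : (i : ℕ) < ℓ then V ⟨i, hi⟩ else 0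

/-- Restriction of a vector. -/
def resv (h : ℓ ≤ ℓ') (V : Fin ℓ' → ℕ) : Fin ℓ → ℕ := fun i => V (Fin.castLE h i)

lemma extv_castLE (h : ℓ ≤ ℓ') (V : Fin ℓ → ℕ) (i : Fin ℓ) :
    extv h V (Fin.castLE h i) = V i := by
  simp [extv]

lemma extv_inj (h : ℓ ≤ ℓ') {a b : Fin ℓ → ℕ} (hab : extv h a = extv h b) : a = b :=
  funext fun i => by
    have := congrFun hab (Fin.castLE h i)
    rwa [extv_castLE, extv_castLE] at this

lemma extv_resv (h : ℓ ≤ ℓ') {V : Fin ℓ' → ℕ}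
    (hV : ∀ i : Fin ℓ', ¬((i : ℕ) < ℓ) → V i = 0) : extv h (resv h V) = V := by
  funext i
  by_cases hi : (i : ℕ) < ℓ
  · have hc : Fin.castLE h ⟨(i : ℕ), hi⟩ = i := by ext; rfl
    simp [extv, resv, hi, hc]
  · simp [extv, hi, (hV i hi).symm]

lemma prod_castLE {M : Type*} [CommMonoid M] (h : ℓ ≤ ℓ') (F : Fin ℓ' → M)
    (hF : ∀ i : Fin ℓ', ¬((i : ℕ) < ℓ) → F i = 1) :
    ∏ i, F i = ∏ i : Fin ℓ, F (Fin.castLE h i) := by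
  rw [show (∏ i : Fin ℓ, F (Fin.castLE h i))
      = ∏ i ∈ Finset.univ.map (Fin.castLEEmb h), F i
      from (Finset.prod_map Finset.univ (Fin.castLEEmb h) F).symm]
  refine (Finset.prod_subset (Finset.subset_univ _) ?_).symm
  intro x _ hx
  refine hF x fun hlt => hx ?_
  exact Finset.mem_map.2 ⟨⟨x, hlt⟩, Finset.mem_univ _, by ext; rfl⟩

lemma sum_castLE {M : Type*} [AddCommMonoid M] (h : ℓ ≤ ℓ') (F : Fin ℓ' → M)
    (hF : ∀ i : Fin ℓ', ¬((i : ℕ) < ℓ) → F i = 0) :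
    ∑ i, F i = ∑ i : Fin ℓ, F (Fin.castLE h i) := by
  rw [show (∑ i : Fin ℓ, F (Fin.castLE h i))
      = ∑ i ∈ Finset.univ.map (Fin.castLEEmb h), F i
      from (Finset.sum_map Finset.univ (Fin.castLEEmb h) F).symm]
  refine (Finset.sum_subset (Finset.subset_univ _) ?_).symm
  intro x _ hx
  refine hF x fun hlt => hx ?_
  exact Finset.mem_map.2 ⟨⟨x, hlt⟩, Finset.mem_univ _, by ext; rfl⟩

lemma sum_extv (h : ℓ ≤ ℓ') (V : Fin ℓ → ℕ) : ∑ i, extv h V i = ∑ i, V i := by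
  rw [sum_castLE h (extv h V) (fun i hi => dif_neg hi)]
  exact Finset.sum_congr rfl fun i _ => extv_castLE h V i

/-- The inclusion of polynomial rings. -/
def Phi (n : ℕ) (h : ℓ ≤ ℓ') : PolyR ℓ n →ₐ[ℚ] PolyR ℓ' n :=
  MvPolynomial.rename fun p => (Fin.castLE h p.1, p.2)

/-- The retraction killing the extra variables. -/
def Psi (n ℓ' ℓ : ℕ) : PolyR ℓ' n →ₐ[ℚ] PolyR ℓ n :=
  MvPolynomial.aeval fun p : Fin ℓ' × Fin n =>
    if hp : (p.1 : ℕ) < ℓ then MvPolynomial.X (⟨p.1, hp⟩, p.2) else 0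

lemma Psi_Phi (h : ℓ ≤ ℓ') (f : PolyR ℓ n) : Psi n ℓ' ℓ (Phi n h f) = f := by
  have key : (Psi n ℓ' ℓ).comp (Phi n h) = AlgHom.id ℚ _ := by
    apply MvPolynomial.algHom_ext
    rintro ⟨a, j⟩
    have ha : ((Fin.castLE h a : Fin ℓ') : ℕ) < ℓ := a.isLt
    have hc : (⟨((Fin.castLE h a : Fin ℓ') : ℕ), ha⟩ : Fin ℓ) = a := by ext; rfl
    rw [AlgHom.comp_apply, AlgHom.id_apply]
    rw [show Phi n h (MvPolynomial.X (a, j) : PolyR ℓ n)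
        = (MvPolynomial.X (Fin.castLE h a, j) : PolyR ℓ' n) from MvPolynomial.rename_X _ _]
    rw [show Psi n ℓ' ℓ (MvPolynomial.X (Fin.castLE h a, j) : PolyR ℓ' n)
        = if hp : ((Fin.castLE h a : Fin ℓ') : ℕ) < ℓ
            then MvPolynomial.X (⟨((Fin.castLE h a : Fin ℓ') : ℕ), hp⟩, j) else 0
        from MvPolynomial.aeval_X _ _]
    rw [dif_pos ha, hc]
  exact DFunLike.congr_fun key f

lemma Phi_Mlist (h : ℓ ≤ ℓ') (A : List (Fin ℓ → ℕ)) :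
    Phi n h (Mlist n A) = Mlist n (A.map (extv h)) := by
  have hlen : (A.map (extv h)).length = A.length := List.length_map _
  unfold Mlist
  rw [map_sum]
  refine Finset.sum_nbij' (fun s => s ∘ Fin.cast hlen) (fun t => t ∘ Fin.cast hlen.symm)
    ?_ ?_ ?_ ?_ ?_
  · intro s hs
    rw [Finset.mem_filter] at hs ⊢
    exact ⟨Finset.mem_univ _, fun a b hab => hs.2 hab⟩
  · intro t ht
    rw [Finset.mem_filter] at ht ⊢
    exact ⟨Finset.mem_univ _, fun a b hab => ht.2 hab⟩
  · intro s _; funext c; exact congrArg s (by ext; rfl)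
  · intro t _; funext c; exact congrArg t (by ext; rfl)
  · intro s _
    simp only [Phi, map_prod, map_pow, rename_X, Function.comp_apply, finCongr_apply]
    refine (Fintype.prod_equiv (finCongr hlen) _ _ ?_).symm
    intro c
    simp only [finCongr_apply, Function.comp_apply]
    have hget : (A.map (extv h)).get c = extv h (A.get (Fin.cast hlen c)) := by
      simp [List.get_eq_getElem]
    rw [hget]
    calc (∏ x : Fin ℓ', X (x, s (Fin.cast hlen c))
            ^ extv h (A.get (Fin.cast hlen c)) x : PolyR ℓ' n)
        = ∏ x : Fin ℓ, X (Fin.castLE h x, s (Fin.cast hlen c))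
            ^ extv h (A.get (Fin.cast hlen c)) (Fin.castLE h x) :=
          prod_castLE h _ (fun i hi => by
            have h0 : extv h (A.get (Fin.cast hlen c)) i = 0 := dif_neg hi
            rw [h0, pow_zero])
      _ = ∏ x : Fin ℓ, X (Fin.castLE h x, s (Fin.cast hlen c))
            ^ A.get (Fin.cast hlen c) x :=
          Finset.prod_congr rfl fun i _ => by rw [extv_castLE]

lemma Jdeal_le (r : ℕ) (h : ℓ ≤ ℓ') : Jdeal r n ℓ ≤ (Jdeal r n ℓ').comap (Phi n h) := by
  rw [Jdeal, Ideal.span_le]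
  rintro f ⟨A, hA, hAlen, rfl⟩
  simp only [SetLike.mem_coe, Ideal.mem_comap]
  rw [Phi_Mlist h]
  apply Ideal.subset_span
  refine ⟨A.map (extv h), ⟨by simp [hA.1], ?_⟩, by simpa using hAlen, rfl⟩
  rintro V hV
  obtain ⟨W, hW, rfl⟩ := List.mem_map.1 hV
  rw [sum_extv]
  exact hA.2 W hW

lemma isWH_Mlist (A : List (Fin ℓ → ℕ)) :
    (Mlist n A).IsWeightedHomogeneous (Wt ℓ n)
      (fun i => ∑ c : Fin A.length, A.get c i) := by
  have hdeg : (∑ c : Fin A.length, ∑ i : Fin ℓ, (A.get c i) • (Pi.single i 1 : Fin ℓ → ℕ))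
      = fun j => ∑ c : Fin A.length, A.get c j := by
    funext j
    simp [Finset.sum_apply, Pi.single_apply, Finset.sum_ite_eq, mul_ite]
  rw [← MvPolynomial.mem_weightedHomogeneousSubmodule]
  unfold Mlist
  apply Submodule.sum_mem
  intro s _
  rw [MvPolynomial.mem_weightedHomogeneousSubmodule, ← hdeg]
  refine MvPolynomial.IsWeightedHomogeneous.prod _ _ _ fun c _ => ?_
  refine MvPolynomial.IsWeightedHomogeneous.prod _ _ _ fun i _ => ?_
  rw [MvPolynomial.X_pow_eq_monomial]
  refine MvPolynomial.isWeightedHomogeneous_monomial _ _ _ ?_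
  rw [Finsupp.weight_apply, Finsupp.sum_single_index (by simp)]

/-- `extv` as an additive map. -/
def extHom (h : ℓ ≤ ℓ') : (Fin ℓ → ℕ) →+ (Fin ℓ' → ℕ) where
  toFun := extv h
  map_zero' := funext fun i => by by_cases hi : (i : ℕ) < ℓ <;> simp [extv, hi]
  map_add' a b := funext fun i => by by_cases hi : (i : ℕ) < ℓ <;> simp [extv, hi]

lemma extv_single (h : ℓ ≤ ℓ') (a : Fin ℓ) :
    extv h (Pi.single a 1) = Pi.single (Fin.castLE h a) (1 : ℕ) := by
  funext i
  by_cases hi : (i : ℕ) < ℓ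
  · simp only [extv, dif_pos hi, Pi.single_apply]
    have : ((⟨(i : ℕ), hi⟩ : Fin ℓ) = a) ↔ (i = Fin.castLE h a) := by
      constructor <;> intro hh <;> ext <;> simpa [Fin.ext_iff] using hh
    by_cases hcase : (⟨(i : ℕ), hi⟩ : Fin ℓ) = a
    · rw [if_pos hcase, if_pos (this.1 hcase)]
    · rw [if_neg hcase, if_neg (fun hh => hcase (this.2 hh))]
  · have hne : i ≠ Fin.castLE h a := by
      intro hh
      apply hi
      rw [hh]
      exact a.isLt
    simp [extv, hi, Pi.single_apply, hne]

lemma weight_mapDomain (h : ℓ ≤ ℓ') (u : (Fin ℓ × Fin n) →₀ ℕ) :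
    Finsupp.weight (Wt ℓ' n)
        (Finsupp.mapDomain (fun p : Fin ℓ × Fin n => (Fin.castLE h p.1, p.2)) u)
      = extv h (Finsupp.weight (Wt ℓ n) u) := by
  rw [Finsupp.weight_apply,
    Finsupp.sum_mapDomain_index (h := fun q (k : ℕ) => k • Wt ℓ' n q)
      (fun q => zero_smul ℕ _) (fun q k₁ k₂ => add_smul k₁ k₂ _),
    Finsupp.weight_apply]
  rw [show extv h (Finsupp.sum u fun i c => c • Wt ℓ n i)
      = extHom h (Finsupp.sum u fun i c => c • Wt ℓ n i) from rfl]
  rw [map_finsuppSum]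
  refine Finsupp.sum_congr fun p _ => ?_
  rw [AddMonoidHom.map_nsmul]
  show (u p) • (Pi.single (Fin.castLE h p.1) 1 : Fin ℓ' → ℕ) = (u p) • extv h (Pi.single p.1 1)
  rw [extv_single]

lemma homog_Phi (h : ℓ ≤ ℓ') {f : PolyR ℓ n} {d : Fin ℓ → ℕ}
    (hf : f.IsWeightedHomogeneous (Wt ℓ n) d) :
    (Phi n h f).IsWeightedHomogeneous (Wt ℓ' n) (extv h d) := by
  intro m hm
  obtain ⟨u, rfl, hu⟩ := MvPolynomial.coeff_rename_ne_zero _ _ _ hm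
  rw [weight_mapDomain h u, hf hu]

lemma low_support (h : ℓ ≤ ℓ') {f : PolyR ℓ' n} {d : Fin ℓ → ℕ}
    (hf : f.IsWeightedHomogeneous (Wt ℓ' n) (extv h d)) :
    ∀ m ∈ f.support, ∀ p : Fin ℓ' × Fin n, m p ≠ 0 → (p.1 : ℕ) < ℓ := by
  intro m hm p hp
  by_contra hlow
  have hw := hf (MvPolynomial.mem_support_iff.1 hm)
  have h0 : (Finsupp.weight (Wt ℓ' n) m) p.1 = 0 := by
    rw [hw]
    exact dif_neg hlow
  rw [Finsupp.weight_apply, Finsupp.sum, Finset.sum_apply] at h0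
  have := Finset.sum_eq_zero_iff.1 h0 p (Finsupp.mem_support_iff.2 hp)
  simp [Pi.single_apply] at this
  exact hp this

lemma Phi_Psi_of_low (h : ℓ ≤ ℓ') {f : PolyR ℓ' n}
    (hf : ∀ m ∈ f.support, ∀ p : Fin ℓ' × Fin n, m p ≠ 0 → (p.1 : ℕ) < ℓ) :
    Phi n h (Psi n ℓ' ℓ f) = f := by
  have hmono : ∀ m ∈ f.support,
      Phi n h (Psi n ℓ' ℓ (MvPolynomial.monomial m (MvPolynomial.coeff m f)))
        = MvPolynomial.monomial m (MvPolynomial.coeff m f) := by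
    intro m hm
    rw [MvPolynomial.monomial_eq, map_mul, map_mul]
    congr 1
    · rw [show (MvPolynomial.C (MvPolynomial.coeff m f) : PolyR ℓ' n)
          = algebraMap ℚ (PolyR ℓ' n) (MvPolynomial.coeff m f) from rfl,
        AlgHom.commutes, AlgHom.commutes]
    · rw [map_finsuppProd, map_finsuppProd]
      refine Finsupp.prod_congr fun p hp => ?_
      have hlow : (p.1 : ℕ) < ℓ := hf m hm p (Finsupp.mem_support_iff.1 hp)
      rw [map_pow, map_pow]
      congr 1
      simp only [Psi, Phi, MvPolynomial.aeval_X, dif_pos hlow, MvPolynomial.rename_X]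
      exact congrArg MvPolynomial.X (by ext <;> rfl)
  conv_rhs => rw [← MvPolynomial.support_sum_monomial_coeff f]
  conv_lhs => rw [← MvPolynomial.support_sum_monomial_coeff f]
  rw [map_sum, map_sum]
  exact Finset.sum_congr rfl hmono

lemma homog_Psi_mem (h : ℓ ≤ ℓ') {f' : PolyR ℓ' n} {d : Fin ℓ → ℕ}
    (hf' : f'.IsWeightedHomogeneous (Wt ℓ' n) (extv h d)) :
    (Psi n ℓ' ℓ f').IsWeightedHomogeneous (Wt ℓ n) d := by
  intro u hu
  have hinj : Function.Injective (fun p : Fin ℓ × Fin n => (Fin.castLE h p.1, p.2)) := by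
    rintro ⟨a, j⟩ ⟨b, k⟩ hpq
    simp only [Prod.mk.injEq] at hpq
    exact Prod.ext (Fin.castLE_injective h hpq.1) hpq.2
  have hco := MvPolynomial.coeff_rename_mapDomain _ hinj (Psi n ℓ' ℓ f') u
  rw [show MvPolynomial.rename (fun p : Fin ℓ × Fin n => (Fin.castLE h p.1, p.2))
        (Psi n ℓ' ℓ f') = Phi n h (Psi n ℓ' ℓ f') from rfl,
    Phi_Psi_of_low h (low_support h hf')] at hco
  have hw := hf' (fun hc => hu (hco ▸ hc))
  rw [weight_mapDomain h u] at hw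
  exact extv_inj h hw

/-- The graded-algebra structure on the polynomial ring for the multigrading. -/
instance wGA (n ℓ : ℕ) :
    GradedAlgebra (MvPolynomial.weightedHomogeneousSubmodule ℚ (Wt ℓ n)) :=
  MvPolynomial.weightedGradedAlgebra ℚ _

lemma decompose_coe (x : PolyR ℓ n) (e : Fin ℓ → ℕ) :
    (DirectSum.decompose (MvPolynomial.weightedHomogeneousSubmodule ℚ (Wt ℓ n)) x e
        : PolyR ℓ n)
      = MvPolynomial.weightedHomogeneousComponent (Wt ℓ n) e x :=
  MvPolynomial.decompose'_apply ℚ _ x e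

lemma key (r : ℕ) (h : ℓ ≤ ℓ') {x : PolyR ℓ' n} (hx : x ∈ Jdeal r n ℓ') :
    ∀ e : Fin ℓ' → ℕ, (∀ i : Fin ℓ', ¬((i : ℕ) < ℓ) → e i = 0) →
      Psi n ℓ' ℓ (MvPolynomial.weightedHomogeneousComponent (Wt ℓ' n) e x)
        ∈ Jdeal r n ℓ := by
  refine Submodule.span_induction ?_ ?_ ?_ ?_ hx
  · rintro f ⟨A, hA, hAlen, rfl⟩ e he
    have hM := isWH_Mlist (n := n) (ℓ := ℓ') A
    by_cases hde : e = fun i : Fin ℓ' => ∑ c : Fin A.length, A.get c i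
    · rw [hde, hM.weightedHomogeneousComponent_same]
      have hzero : ∀ V ∈ A, ∀ i : Fin ℓ', ¬((i : ℕ) < ℓ) → V i = 0 := by
        intro V hV i hi
        have h0 : (∑ c : Fin A.length, A.get c i) = 0 := by
          have := he i hi; rwa [hde] at this
        obtain ⟨c, rfl⟩ := List.mem_iff_get.1 hV
        exact Finset.sum_eq_zero_iff.1 h0 c (Finset.mem_univ c)
      have hrepr : Mlist n A = Mlist n ((A.map (resv h)).map (extv h)) := by
        congr 1
        rw [List.map_map]
        conv_lhs => rw [← List.map_id A]
        exact List.map_congr_left fun V hV => (extv_resv h (hzero V hV)).symm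
      rw [hrepr, ← Phi_Mlist h, Psi_Phi h]
      apply Ideal.subset_span
      refine ⟨A.map (resv h), ⟨by simp [hA.1], ?_⟩, by simpa using hAlen, rfl⟩
      rintro V hV
      obtain ⟨W, hW, rfl⟩ := List.mem_map.1 hV
      have hsum : (∑ i, resv h W i) = ∑ i, W i := by
        conv_rhs => rw [← extv_resv h (hzero W hW)]
        rw [sum_extv]
      rw [hsum]
      exact hA.2 W hW
    · rw [hM.weightedHomogeneousComponent_ne e hde, map_zero]
      exact zero_mem _
  · intro e he
    rw [map_zero, map_zero]
    exact zero_mem _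
  · intro x y hx hy ihx ihy e he
    rw [map_add, map_add]
    exact add_mem (ihx e he) (ihy e he)
  · intro a x hx ih e he
    rw [smul_eq_mul, ← decompose_coe, DirectSum.decompose_mul, DirectSum.coe_mul_apply,
      map_sum]
    refine Submodule.sum_mem _ ?_
    rintro ⟨u, v⟩ huv
    rw [Finset.mem_filter] at huv
    rw [map_mul]
    refine Ideal.mul_mem_left _ _ ?_
    have hv : ∀ i : Fin ℓ', ¬((i : ℕ) < ℓ) → v i = 0 := by
      intro i hi
      have h1 : u i + v i = 0 := by
        have := congrFun huv.2 i
        simpa using this.trans (he i hi)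
      omega
    have := ih v hv
    rwa [← decompose_coe] at this

end Stmt3Aux

/-- Stability of the multigraded Hilbert function under increasing the number
of sets of variables from `ℓ` to `ℓ'`: the dimension of the multidegree-`d` component of `R/J`
equals the dimension of the multidegree-`(d,0,…,0)` component of `R'/J'`. -/
theorem statement3 (r n ℓ ℓ' : ℕ) (hr : 1 ≤ r) (hn : 1 ≤ n) (hℓ : 1 ≤ ℓ) (hℓℓ' : ℓ ≤ ℓ')
    (d : Fin ℓ → ℕ) :
    compDim r n ℓ d =
      compDim r n ℓ' (fun i => if h : (i : ℕ) < ℓ then d ⟨i, h⟩ else 0) := by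
  classical
  open Stmt3Aux in
  have hd' : (fun i : Fin ℓ' => if h : (i : ℕ) < ℓ then d ⟨i, h⟩ else 0)
      = Stmt3Aux.extv hℓℓ' d := rfl
  rw [hd']
  set J := Jdeal r n ℓ with hJ
  set J' := Jdeal r n ℓ' with hJ'
  have hle : J ≤ J'.comap (Stmt3Aux.Phi n hℓℓ') := Stmt3Aux.Jdeal_le r hℓℓ'
  set U : (PolyR ℓ n ⧸ J) →ₐ[ℚ] (PolyR ℓ' n ⧸ J') :=
    Ideal.quotientMapₐ J' (Stmt3Aux.Phi n hℓℓ') hle with hU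
  have hUmk : ∀ f : PolyR ℓ n,
      U ((Ideal.Quotient.mkₐ ℚ J).toLinearMap f)
        = (Ideal.Quotient.mkₐ ℚ J').toLinearMap (Stmt3Aux.Phi n hℓℓ' f) := by
    intro f
    rfl
  have hT : ∀ x ∈ (homogComp ℓ n d).map (Ideal.Quotient.mkₐ ℚ J).toLinearMap,
      U.toLinearMap x ∈
        (homogComp ℓ' n (Stmt3Aux.extv hℓℓ' d)).map (Ideal.Quotient.mkₐ ℚ J').toLinearMap := by
    rintro x ⟨f, hf, rfl⟩
    exact ⟨Stmt3Aux.Phi n hℓℓ' f,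
      (MvPolynomial.mem_weightedHomogeneousSubmodule _ _ _ _).2
        (Stmt3Aux.homog_Phi hℓℓ'
          ((MvPolynomial.mem_weightedHomogeneousSubmodule _ _ _ _).1 hf)),
      (hUmk f).symm⟩
  set T := U.toLinearMap.restrict hT with hTdef
  have hbij : Function.Bijective T := by
    constructor
    · rw [← LinearMap.ker_eq_bot, LinearMap.ker_eq_bot']
      rintro ⟨x, hx⟩ hz
      obtain ⟨f, hf, hmk⟩ := hx
      have hUx : U x = 0 := congrArg Subtype.val hz
      have hPhiJ : Stmt3Aux.Phi n hℓℓ' f ∈ J' := by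
        rw [← hmk, hUmk f] at hUx
        exact (Ideal.Quotient.eq_zero_iff_mem).1 hUx
      have hkey := Stmt3Aux.key r hℓℓ' hPhiJ (Stmt3Aux.extv hℓℓ' d)
        (fun i hi => dif_neg hi)
      have hWH : (Stmt3Aux.Phi n hℓℓ' f).IsWeightedHomogeneous
          (Stmt3Aux.Wt ℓ' n) (Stmt3Aux.extv hℓℓ' d) :=
        Stmt3Aux.homog_Phi hℓℓ'
          ((MvPolynomial.mem_weightedHomogeneousSubmodule _ _ _ _).1 hf)
      rw [hWH.weightedHomogeneousComponent_same, Stmt3Aux.Psi_Phi hℓℓ'] at hkey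
      apply Subtype.ext
      show x = 0
      rw [← hmk]
      exact (Ideal.Quotient.eq_zero_iff_mem).2 hkey
    · rintro ⟨z', hz'⟩
      obtain ⟨f', hf', hmk⟩ := hz'
      have hWH' : f'.IsWeightedHomogeneous (Stmt3Aux.Wt ℓ' n) (Stmt3Aux.extv hℓℓ' d) :=
        (MvPolynomial.mem_weightedHomogeneousSubmodule _ _ _ _).1 hf'
      refine ⟨⟨(Ideal.Quotient.mkₐ ℚ J).toLinearMap (Stmt3Aux.Psi n ℓ' ℓ f'),
        ⟨Stmt3Aux.Psi n ℓ' ℓ f',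
          (MvPolynomial.mem_weightedHomogeneousSubmodule _ _ _ _).2
            (Stmt3Aux.homog_Psi_mem hℓℓ' hWH'), rfl⟩⟩, ?_⟩
      apply Subtype.ext
      show U ((Ideal.Quotient.mkₐ ℚ J).toLinearMap (Stmt3Aux.Psi n ℓ' ℓ f')) = z'
      rw [hUmk, Stmt3Aux.Phi_Psi_of_low hℓℓ' (Stmt3Aux.low_support hℓℓ' hWH'), hmk]
  exact (LinearEquiv.ofBijective T hbij).finrank_eq

end
end

section
/- Let B be an ℓ×n matrix of nonnegative integers whose total entry sum is strictly greater than 2rn − r − n. Then there exists an ℓ×n matrix A of nonnegative integers with A ≤ B entrywise, every column sum of A divisible by r, and total entry sum of A equal to rn. Equivalently, every monomial of total degree strictly greater than 2rn − r − n in the variables x_{ij} (1 ≤ i ≤ ℓ, 1 ≤ j ≤ n) is divisible by a monomial X^A = ∏_{i,j} x_{ij}^{A_{ij}} whose exponent matrix A has all column sums divisible by r and r-size w_r(A) = (sum of entries)/r exactly n. -/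
lemma exists_le_sum' {ι : Type*} [DecidableEq ι] (d : ι → ℕ) (s : Finset ι) :
    ∀ k, k ≤ ∑ i ∈ s, d i → ∃ m : ι → ℕ, (∀ i, m i ≤ d i) ∧ ∑ i ∈ s, m i = k := by
  induction s using Finset.induction_on with
  | empty =>
    intro k hk
    simp only [Finset.sum_empty, Nat.le_zero] at hk
    exact ⟨fun _ => 0, fun i => Nat.zero_le _, by simp [hk]⟩
  | insert _ _ ha =>
    rename_i a s ih
    intro k hk
    rw [Finset.sum_insert ha] at hk
    obtain ⟨m, hm, hms⟩ := ih (k - d a) (by omega)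
    refine ⟨Function.update m a (min k (d a)), fun i => ?_, ?_⟩
    · by_cases h : i = a
      · subst h; simp [Function.update_self]
      · simpa [Function.update_of_ne h] using hm i
    · have hcong : ∑ x ∈ s, Function.update m a (min k (d a)) x = ∑ x ∈ s, m x :=
        Finset.sum_congr rfl fun i hi =>
          Function.update_of_ne (by rintro rfl; exact ha hi) _ _
      rw [Finset.sum_insert ha, Function.update_self, hcong, hms]
      omega

/-- Every `ℓ×n` matrix `B` of nonnegative integers with total entry sum
strictly greater than `2rn - r - n` dominates (entrywise) an `ℓ×n` matrix `A` all of whose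
column sums are divisible by `r` and whose total entry sum is exactly `rn` (i.e. `A` has
`r`-size exactly `n`).  Equivalently, every monomial of total degree `> 2rn - r - n` is
divisible by a monomial `X^A` with `A` an `r`-matrix of `r`-size `n`. -/
theorem statement8 (r n ℓ : ℕ) (hr : 1 ≤ r) (hn : 1 ≤ n) (hℓ : 1 ≤ ℓ)
    (B : Fin ℓ → Fin n → ℕ) (hB : 2 * r * n - r - n < ∑ i, ∑ j, B i j) :
    ∃ A : Fin ℓ → Fin n → ℕ,
      (∀ i j, A i j ≤ B i j) ∧
      (∀ j, r ∣ ∑ i, A i j) ∧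
      (∑ i, ∑ j, A i j) = r * n := by
  classical
  -- column sums of B
  set c : Fin n → ℕ := fun j => ∑ i, B i j with hc
  have hswapB : (∑ i, ∑ j, B i j) = ∑ j, c j := Finset.sum_comm
  -- step 1: ∑ j, c j / r ≥ n
  have hE : n ≤ ∑ j, c j / r := by
    by_contra h
    push_neg at h
    have hEn : (∑ j, c j / r) ≤ n - 1 := by omega
    have h1 : ∀ j, c j ≤ r * (c j / r) + (r - 1) := by
      intro j
      have := Nat.mod_lt (c j) (show 0 < r by omega)
      have := Nat.div_add_mod (c j) r
      omega
    have h2 : (∑ j, c j) ≤ r * (∑ j, c j / r) + n * (r - 1) := by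
      calc (∑ j, c j) ≤ ∑ j, (r * (c j / r) + (r - 1)) :=
            Finset.sum_le_sum fun j _ => h1 j
        _ = r * (∑ j, c j / r) + n * (r - 1) := by
            rw [Finset.sum_add_distrib, Finset.mul_sum]
            simp [Finset.sum_const, Finset.card_univ, mul_comm]
    have h3 : (∑ j, c j) ≤ r * (n - 1) + n * (r - 1) :=
      le_trans h2 (by
        have := Nat.mul_le_mul_left r hEn
        omega)
    rw [hswapB] at hB
    have h4 : r * (n - 1) = r * n - r := by
      rw [Nat.mul_sub, mul_one]
    have h5 : n * (r - 1) = n * r - n := by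
      rw [Nat.mul_sub, mul_one]
    have h6 : r ≤ r * n := Nat.le_mul_of_pos_right r hn
    have h7 : n ≤ n * r := Nat.le_mul_of_pos_right n hr
    have h8 : 2 * r * n = r * n + n * r := by ring
    have h9 : n * r = r * n := mul_comm n r
    omega
  -- step 2: choose f j ≤ c j / r with ∑ f = n
  obtain ⟨f, hf, hfs⟩ := exists_le_sum' (fun j => c j / r) Finset.univ n hE
  -- step 3: in each column, choose entries with sum r * f j
  have hcol : ∀ j : Fin n, ∃ a : Fin ℓ → ℕ, (∀ i, a i ≤ B i j) ∧ ∑ i, a i = r * f j := by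
    intro j
    apply exists_le_sum' (fun i => B i j) Finset.univ
    calc r * f j ≤ r * (c j / r) := Nat.mul_le_mul_left r (hf j)
      _ ≤ c j := Nat.mul_div_le _ _
  choose a ha has using hcol
  refine ⟨fun i j => a j i, fun i j => ha j i, fun j => ⟨f j, has j⟩, ?_⟩
  rw [Finset.sum_comm]
  calc (∑ j, ∑ i, a j i) = ∑ j, r * f j := Finset.sum_congr rfl fun j _ => has j
    _ = r * ∑ j, f j := by rw [Finset.mul_sum]
    _ = r * n := by rw [hfs]
end

section
/- For every ℓ×ℓ matrix τ = (τ_{ii'}) with rational entries and every r-composition-matrix A, the polynomial obtained from M_A by the linear substitution x_{ij} ↦ Σ_{i'=1}^ℓ τ_{ii'} x_{i'j} (for all i, j) lies in the ℚ-linear span of the monomial quasi-invariants {M_B : B an r-composition-matrix with ℓ rows and at most n columns}. Consequently, the ideal J generated by the M_A is stable under the action f(X) ↦ f(τX) of GL_ℓ(ℚ) on R. -/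
open scoped Classical

noncomputable section

/-- The algebra endomorphism of `R` induced by the linear substitution
`x_{ij} ↦ Σ_{i'} τ_{i i'} x_{i' j}` attached to an `ℓ×ℓ` matrix `τ`. -/
noncomputable def subst (n : ℕ) {ℓ : ℕ} (τ : Matrix (Fin ℓ) (Fin ℓ) ℚ) :
    PolyR ℓ n →ₐ[ℚ] PolyR ℓ n :=
  MvPolynomial.aeval
    (fun p : Fin ℓ × Fin n =>
      ∑ i' : Fin ℓ, MvPolynomial.C (τ p.1 i') * MvPolynomial.X (i', p.2))

open MvPolynomial in
/-- The one-column polynomial `∏ i, (∑ i', τ_{i i'} x_{i'})^{V i}`. -/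
noncomputable def qpoly {ℓ : ℕ} (τ : Matrix (Fin ℓ) (Fin ℓ) ℚ) (V : Fin ℓ → ℕ) :
    MvPolynomial (Fin ℓ) ℚ :=
  ∏ i, (∑ i', C (τ i i') * X i') ^ V i

open MvPolynomial in
lemma qpoly_hom {ℓ : ℕ} (τ : Matrix (Fin ℓ) (Fin ℓ) ℚ) (V : Fin ℓ → ℕ) :
    (qpoly τ V).IsHomogeneous (∑ i, V i) := by
  apply IsHomogeneous.prod
  intro i _
  have h1 : ((∑ i', C (τ i i') * X i' : MvPolynomial (Fin ℓ) ℚ)).IsHomogeneous 1 := by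
    apply IsHomogeneous.sum
    intro i' _
    exact (isHomogeneous_X _ _).C_mul _
  simpa only [one_mul] using h1.pow (V i)

open MvPolynomial in
lemma qpoly_support_sum {ℓ : ℕ} (τ : Matrix (Fin ℓ) (Fin ℓ) ℚ) (V : Fin ℓ → ℕ)
    {W : Fin ℓ →₀ ℕ} (hW : W ∈ (qpoly τ V).support) : ∑ i, W i = ∑ i, V i := by
  have h := qpoly_hom τ V (mem_support_iff.mp hW)
  rw [← h, Finsupp.weight_apply, Finsupp.sum_fintype]
  · simp
  · intro i; simp

/-- The algebra map embedding one-column polynomials into column `j`. -/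
noncomputable def colMap (n : ℕ) {ℓ : ℕ} (j : Fin n) :
    MvPolynomial (Fin ℓ) ℚ →ₐ[ℚ] PolyR ℓ n :=
  MvPolynomial.aeval fun i => MvPolynomial.X (i, j)

open MvPolynomial in
lemma subst_colmono (n : ℕ) {ℓ : ℕ} (τ : Matrix (Fin ℓ) (Fin ℓ) ℚ) (V : Fin ℓ → ℕ)
    (j : Fin n) :
    subst n τ (∏ i, X (i, j) ^ V i) = colMap n j (qpoly τ V) := by
  simp [subst, colMap, qpoly, map_prod, map_pow, map_sum, aeval_X]

open MvPolynomial in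
lemma colMap_monomial (n : ℕ) {ℓ : ℕ} (j : Fin n) (W : Fin ℓ →₀ ℕ) (a : ℚ) :
    colMap n j (monomial W a) = a • ∏ i, X (i, j) ^ W i := by
  rw [colMap, aeval_monomial, Finsupp.prod_fintype]
  · rw [Algebra.smul_def]
  · intro i; exact pow_zero _

open MvPolynomial in
lemma colMap_qpoly (n : ℕ) {ℓ : ℕ} (τ : Matrix (Fin ℓ) (Fin ℓ) ℚ) (V : Fin ℓ → ℕ)
    (j : Fin n) :
    colMap n j (qpoly τ V) =
      ∑ W ∈ (qpoly τ V).support,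
        (coeff W (qpoly τ V)) • ∏ i, X (i, j) ^ W i := by
  conv_lhs => rw [← (qpoly τ V).support_sum_monomial_coeff]
  rw [map_sum]
  exact Finset.sum_congr rfl fun W _ => colMap_monomial n j W _

/-- Function version of `Mlist`. -/
noncomputable def Mfun (n : ℕ) {ℓ : ℕ} (k : ℕ) (B : Fin k → Fin ℓ → ℕ) : PolyR ℓ n :=
  ∑ s ∈ Finset.univ.filter (fun s : Fin k → Fin n => StrictMono s),
    ∏ c, ∏ i, MvPolynomial.X (i, s c) ^ B c i

lemma Mlist_eq_Mfun (n : ℕ) {ℓ : ℕ} (A : List (Fin ℓ → ℕ)) :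
    Mlist n A = Mfun n A.length (fun c => A.get c) := rfl

lemma Mfun_cast (n : ℕ) {ℓ k k' : ℕ} (h : k = k') (B : Fin k' → Fin ℓ → ℕ) :
    Mfun n k (fun c => B (Fin.cast h c)) = Mfun n k' B := by
  subst h; rfl

lemma Mfun_eq_Mlist (n : ℕ) {ℓ k : ℕ} (B : Fin k → Fin ℓ → ℕ) :
    Mfun n k B = Mlist n (List.ofFn B) := by
  rw [Mlist_eq_Mfun, ← Mfun_cast n (List.length_ofFn : (List.ofFn B).length = k) B]
  congr 1
  funext c
  exact (List.get_ofFn B c).symm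

open MvPolynomial in
lemma subst_Mlist (n : ℕ) {ℓ : ℕ} (τ : Matrix (Fin ℓ) (Fin ℓ) ℚ) (A : List (Fin ℓ → ℕ)) :
    subst n τ (Mlist n A) =
      ∑ p ∈ Fintype.piFinset (fun c : Fin A.length => (qpoly τ (A.get c)).support),
        (∏ c, coeff (p c) (qpoly τ (A.get c))) •
          Mfun n A.length (fun c i => p c i) := by
  rw [Mlist, map_sum]
  have step1 : ∀ s : Fin A.length → Fin n,
      subst n τ (∏ c, ∏ i, X (i, s c) ^ A.get c i) =
        ∑ p ∈ Fintype.piFinset (fun c : Fin A.length => (qpoly τ (A.get c)).support),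
          (∏ c, coeff (p c) (qpoly τ (A.get c))) •
            ∏ c, ∏ i, X (i, s c) ^ p c i := by
    intro s
    rw [map_prod]
    have : ∀ c : Fin A.length,
        subst n τ (∏ i, X (i, s c) ^ A.get c i) =
          ∑ W ∈ (qpoly τ (A.get c)).support,
            (coeff W (qpoly τ (A.get c))) • ∏ i, X (i, s c) ^ W i := fun c => by
      rw [subst_colmono, colMap_qpoly]
    rw [Finset.prod_congr rfl fun c _ => this c, Finset.prod_univ_sum]
    refine Finset.sum_congr rfl fun p _ => ?_
    simp only [MvPolynomial.smul_eq_C_mul, Finset.prod_mul_distrib, map_prod]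
  rw [Finset.sum_congr rfl fun s _ => step1 s, Finset.sum_comm]
  refine Finset.sum_congr rfl fun p _ => ?_
  rw [Mfun, Finset.smul_sum]

/-- For every `ℓ×ℓ` rational matrix `τ`, the substitution
`x_{ij} ↦ Σ_{i'} τ_{i i'} x_{i' j}` sends each monomial quasi-invariant `M_A` into the
`ℚ`-linear span of the monomial quasi-invariants; consequently the ideal `J` is stable
under the `GL_ℓ(ℚ)`-action `f(X) ↦ f(τX)`. -/
theorem statement9 (r n ℓ : ℕ) (hr : 1 ≤ r) (hn : 1 ≤ n) (hℓ : 1 ≤ ℓ) :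
    (∀ τ : Matrix (Fin ℓ) (Fin ℓ) ℚ, ∀ A : List (Fin ℓ → ℕ),
        IsRCompList r A → A.length ≤ n →
        subst n τ (Mlist n A) ∈ Submodule.span ℚ
          {f : PolyR ℓ n | ∃ B : List (Fin ℓ → ℕ),
            IsRCompList r B ∧ B.length ≤ n ∧ f = Mlist n B}) ∧
    (∀ τ : GL (Fin ℓ) ℚ, ∀ f ∈ Jdeal r n ℓ,
        subst n (τ : Matrix (Fin ℓ) (Fin ℓ) ℚ) f ∈ Jdeal r n ℓ) := by
  have part1 : ∀ τ : Matrix (Fin ℓ) (Fin ℓ) ℚ, ∀ A : List (Fin ℓ → ℕ),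
      IsRCompList r A → A.length ≤ n →
      subst n τ (Mlist n A) ∈ Submodule.span ℚ
        {f : PolyR ℓ n | ∃ B : List (Fin ℓ → ℕ),
          IsRCompList r B ∧ B.length ≤ n ∧ f = Mlist n B} := by
    intro τ A hA hlen
    rw [subst_Mlist]
    refine Submodule.sum_mem _ fun p hp => Submodule.smul_mem _ _ ?_
    refine Submodule.subset_span ?_
    refine ⟨List.ofFn (fun c => (fun i => p c i)), ?_, ?_, ?_⟩
    · constructor
      · rw [Ne, List.ofFn_eq_nil_iff]
        intro h
        exact hA.1 (List.length_eq_zero_iff.mp h)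
      · intro V hV
        rw [List.mem_ofFn] at hV
        obtain ⟨c, rfl⟩ := hV
        have hpc : p c ∈ (qpoly τ (A.get c)).support :=
          Fintype.mem_piFinset.mp hp c
        have hsum : ∑ i, p c i = ∑ i, A.get c i := qpoly_support_sum τ _ hpc
        have hAc := hA.2 (A.get c) (A.get_mem c)
        refine ⟨?_, ?_⟩
        · show (∑ i, p c i) ≠ 0
          rw [hsum]; exact hAc.1
        · show r ∣ ∑ i, p c i
          rw [hsum]; exact hAc.2
    · exact le_trans (le_of_eq List.length_ofFn) hlen
    · exact Mfun_eq_Mlist n (fun c i => p c i)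
  refine ⟨part1, ?_⟩
  intro τ f hf
  have key : ∀ x ∈ {f : PolyR ℓ n | ∃ B : List (Fin ℓ → ℕ),
      IsRCompList r B ∧ B.length ≤ n ∧ f = Mlist n B},
      subst n (τ : Matrix (Fin ℓ) (Fin ℓ) ℚ) x ∈ Jdeal r n ℓ := by
    rintro x ⟨A, h1, h2, rfl⟩
    have h := part1 (τ : Matrix (Fin ℓ) (Fin ℓ) ℚ) A h1 h2
    have hle : Submodule.span ℚ
        {f : PolyR ℓ n | ∃ B : List (Fin ℓ → ℕ),
          IsRCompList r B ∧ B.length ≤ n ∧ f = Mlist n B} ≤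
        (Jdeal r n ℓ).restrictScalars ℚ :=
      Submodule.span_le.mpr fun y hy => Ideal.subset_span hy
    exact hle h
  rw [Jdeal, ← Ideal.submodule_span_eq] at hf
  refine Submodule.span_induction ?_ ?_ ?_ ?_ hf
  · intro x hx
    exact key x hx
  · simp only [map_zero]
    exact Ideal.zero_mem _
  · intro x y _ _ hx hy
    rw [map_add]
    exact Ideal.add_mem _ hx hy
  · intro a x _ hx
    rw [smul_eq_mul, map_mul]
    exact Ideal.mul_mem_left _ _ hx

end
end

section
/- For every d ∈ ℕ^ℓ, the number of ℓ×n matrices A of nonnegative integers with row-sum vector d (Σ_j A_{ij} = d_i for all i) such that π(A) is an ℓ-Dyck path equals the number of pairs (β, C), where β is a Dyck path of height n and C = (c_{kj}) is an (n−1)×ℓ matrix of nonnegative integers satisfying Σ_{j=1}^ℓ c_{kj} = a_k(β) for every 1 ≤ k ≤ n−1 and Σ_{k=1}^{n−1} c_{kj} = d_j for every 1 ≤ j ≤ ℓ. -/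
open scoped Classical

noncomputable section

/-- `π(A)` is an `ℓ`-Dyck path: with `w₁,…,w_{ℓn}` the entries-reading word of `A` (column by
column, top to bottom), `ℓ·(w₁ + … + w_t) ≤ t - 1` for all `1 ≤ t ≤ ℓn`; here the entry of
`A` at 0-based reading position `j·ℓ + i` is `A i j`. -/
def IsLDyck (ℓ n : ℕ) (A : Fin ℓ → Fin n → ℕ) : Prop :=
  ∀ s : ℕ, s < ℓ * n →
    ℓ * (∑ p ∈ Finset.univ.filter
          (fun p : Fin ℓ × Fin n => (p.2 : ℕ) * ℓ + (p.1 : ℕ) ≤ s), A p.1 p.2) ≤ s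

/-- A Dyck path of height `n`, encoded by its numbers of east steps at each level: a function
`a : Fin (n+1) → ℕ` with `Σ a = n` (the path ends at `(n,n)`) and, for each level `k < n`,
`a 0 + … + a k ≤ k` (every point `(x,y)` of the path satisfies `x ≤ y`).  Here `a k` is the
number of east steps at level `k`, i.e. `a_k(β)`. -/
def DyckEnc (n : ℕ) : Type :=
  {a : Fin (n + 1) → ℕ // (∑ k, a k) = n ∧
    ∀ k : Fin (n + 1), (k : ℕ) < n →
      (∑ j ∈ Finset.univ.filter (fun j : Fin (n + 1) => j ≤ k), a j) ≤ (k : ℕ)}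

namespace S13

/-- A filtered sum over `Fin N` indices `≤ m` as a range sum. -/
lemma filter_sum_eq_range {N : ℕ} (f : Fin N → ℕ) (m : ℕ) (hm : m < N) :
    ∑ j ∈ Finset.univ.filter (fun j : Fin N => (j : ℕ) ≤ m), f j
      = ∑ t ∈ Finset.range (m + 1), (if h : t < N then f ⟨t, h⟩ else 0) := by
  set F : ℕ → ℕ := fun t => if h : t < N then f ⟨t, h⟩ else 0 with hF
  rw [Finset.sum_filter]
  have h1 : ∀ j : Fin N, (if (j : ℕ) ≤ m then f j else 0)
      = (fun t => if t ≤ m then F t else 0) ((j : ℕ)) := by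
    intro j
    simp only [hF, j.isLt, dif_pos, Fin.eta]
  rw [Finset.sum_congr rfl (fun j _ => h1 j),
    Fin.sum_univ_eq_sum_range (fun t => if t ≤ m then F t else 0) N, ← Finset.sum_filter]
  have hset : (Finset.range N).filter (fun t => t ≤ m) = Finset.range (m + 1) := by
    ext t; simp [Finset.mem_range, Finset.mem_filter]; omega
  rw [hset]

lemma sum_filter_le_eq {N M : ℕ} (f : Fin N → ℕ) (g : Fin M → ℕ) (m : ℕ)
    (hmN : m < N) (hmM : m < M)
    (hfg : ∀ t : ℕ, t ≤ m → ∀ (h1 : t < N) (h2 : t < M), f ⟨t, h1⟩ = g ⟨t, h2⟩) :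
    ∑ j ∈ Finset.univ.filter (fun j : Fin N => (j : ℕ) ≤ m), f j
      = ∑ j ∈ Finset.univ.filter (fun j : Fin M => (j : ℕ) ≤ m), g j := by
  rw [filter_sum_eq_range f m hmN, filter_sum_eq_range g m hmM]
  refine Finset.sum_congr rfl fun t ht => ?_
  rw [Finset.mem_range] at ht
  rw [dif_pos (by omega : t < N), dif_pos (by omega : t < M)]
  exact hfg t (by omega) _ _

lemma sum_shift {N : ℕ} (hN : 1 ≤ N) (f : Fin N → ℕ) (h0 : f ⟨0, by omega⟩ = 0) :
    ∑ j, f j = ∑ k : Fin (N - 1), f ⟨(k : ℕ) + 1, by have := k.isLt; omega⟩ := by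
  set F : ℕ → ℕ := fun t => if h : t < N then f ⟨t, h⟩ else 0 with hF
  have h1 : ∀ j : Fin N, f j = F ((j : ℕ)) := by
    intro j; simp only [hF, j.isLt, dif_pos, Fin.eta]
  rw [Finset.sum_congr rfl (fun j _ => h1 j), Fin.sum_univ_eq_sum_range F N]
  have hr : Finset.range N = Finset.range ((N - 1) + 1) := by congr 1; omega
  rw [hr, Finset.sum_range_succ']
  have hF0 : F 0 = 0 := by
    simp only [hF, dif_pos (by omega : (0:ℕ) < N)]; exact h0
  rw [hF0, add_zero, ← Fin.sum_univ_eq_sum_range (fun t => F (t + 1)) (N - 1)]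
  refine Finset.sum_congr rfl fun k _ => ?_
  have hk : (k : ℕ) + 1 < N := by have := k.isLt; omega
  simp only [hF, dif_pos hk]

def colsum {ℓ n : ℕ} (A : Fin ℓ → Fin n → ℕ) (c : Fin n) : ℕ := ∑ i, A i c

lemma pairsum {ℓ n : ℕ} (A : Fin ℓ → Fin n → ℕ) (m : ℕ) :
    ∑ p ∈ Finset.univ.filter (fun p : Fin ℓ × Fin n => (p.2 : ℕ) ≤ m), A p.1 p.2
      = ∑ c ∈ Finset.univ.filter (fun c : Fin n => (c : ℕ) ≤ m), colsum A c := by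
  rw [Finset.sum_filter, Finset.sum_filter, Fintype.sum_prod_type, Finset.sum_comm]
  refine Finset.sum_congr rfl fun c _ => ?_
  by_cases h : (c : ℕ) ≤ m
  · simp [h, colsum]
  · simp [h]

lemma isLDyck_iff {ℓ n : ℕ} (hℓ : 1 ≤ ℓ) (A : Fin ℓ → Fin n → ℕ) :
    IsLDyck ℓ n A ↔ ∀ j : Fin n,
      (∑ c ∈ Finset.univ.filter (fun c : Fin n => (c : ℕ) ≤ (j : ℕ)), colsum A c) ≤ (j : ℕ) := by
  constructor
  · intro h j
    have hjn : (j : ℕ) + 1 ≤ n := j.isLt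
    have hmul : ((j : ℕ) + 1) * ℓ ≤ n * ℓ := Nat.mul_le_mul_right ℓ hjn
    have hexp : ((j : ℕ) + 1) * ℓ = (j : ℕ) * ℓ + ℓ := by ring
    have hcomm : ℓ * n = n * ℓ := Nat.mul_comm _ _
    have hs : (j : ℕ) * ℓ + (ℓ - 1) < ℓ * n := by omega
    have key := h ((j : ℕ) * ℓ + (ℓ - 1)) hs
    have hfe : Finset.univ.filter
          (fun p : Fin ℓ × Fin n => (p.2 : ℕ) * ℓ + (p.1 : ℕ) ≤ (j : ℕ) * ℓ + (ℓ - 1))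
        = Finset.univ.filter (fun p : Fin ℓ × Fin n => (p.2 : ℕ) ≤ (j : ℕ)) := by
      ext p
      simp only [Finset.mem_filter, Finset.mem_univ, true_and]
      constructor
      · intro hp
        by_contra hc
        push_neg at hc
        have h2 : ((j : ℕ) + 1) * ℓ ≤ (p.2 : ℕ) * ℓ := Nat.mul_le_mul_right ℓ hc
        omega
      · intro hp
        have h2 : (p.2 : ℕ) * ℓ ≤ (j : ℕ) * ℓ := Nat.mul_le_mul_right ℓ hp
        have h3 := p.1.isLt
        omega
    rw [hfe, pairsum] at key
    by_contra hc
    push_neg at hc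
    have h4 : ((j : ℕ) + 1) * ℓ ≤ (∑ c ∈ Finset.univ.filter
        (fun c : Fin n => (c : ℕ) ≤ (j : ℕ)), colsum A c) * ℓ := Nat.mul_le_mul_right ℓ hc
    have h5 : ℓ * (∑ c ∈ Finset.univ.filter
        (fun c : Fin n => (c : ℕ) ≤ (j : ℕ)), colsum A c) = (∑ c ∈ Finset.univ.filter
        (fun c : Fin n => (c : ℕ) ≤ (j : ℕ)), colsum A c) * ℓ := Nat.mul_comm _ _
    omega
  · intro h s hs
    have hj : s / ℓ < n := (Nat.div_lt_iff_lt_mul (by omega)).2 (by rw [Nat.mul_comm n ℓ]; exact hs)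
    have hsub : Finset.univ.filter
          (fun p : Fin ℓ × Fin n => (p.2 : ℕ) * ℓ + (p.1 : ℕ) ≤ s)
        ⊆ Finset.univ.filter (fun p : Fin ℓ × Fin n => (p.2 : ℕ) ≤ s / ℓ) := by
      intro p
      simp only [Finset.mem_filter, Finset.mem_univ, true_and]
      intro hp
      exact (Nat.le_div_iff_mul_le (by omega)).2 (by omega)
    have h1 : ∑ p ∈ Finset.univ.filter
          (fun p : Fin ℓ × Fin n => (p.2 : ℕ) * ℓ + (p.1 : ℕ) ≤ s), A p.1 p.2
        ≤ ∑ p ∈ Finset.univ.filter (fun p : Fin ℓ × Fin n => (p.2 : ℕ) ≤ s / ℓ), A p.1 p.2 :=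
      Finset.sum_le_sum_of_subset hsub
    have h2 := h ⟨s / ℓ, hj⟩
    rw [pairsum] at h1
    have h3 : ℓ * (s / ℓ) ≤ s := Nat.mul_div_le s ℓ
    calc ℓ * (∑ p ∈ Finset.univ.filter
          (fun p : Fin ℓ × Fin n => (p.2 : ℕ) * ℓ + (p.1 : ℕ) ≤ s), A p.1 p.2)
        ≤ ℓ * (s / ℓ) := Nat.mul_le_mul_left ℓ (le_trans h1 h2)
      _ ≤ s := h3

section Main

variable {n ℓ : ℕ}

/-- matrix from `C`: column 0 is zero, column `j ≥ 1` is row `j-1` of `C` transposed. -/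
def mkMat (C : Fin (n - 1) → Fin ℓ → ℕ) : Fin ℓ → Fin n → ℕ :=
  fun i j => if h : 0 < (j : ℕ) then C ⟨(j : ℕ) - 1, by have := j.isLt; omega⟩ i else 0

def mkC (A : Fin ℓ → Fin n → ℕ) : Fin (n - 1) → Fin ℓ → ℕ :=
  fun k j => A j ⟨(k : ℕ) + 1, by have := k.isLt; omega⟩

def mkEnc (d : Fin ℓ → ℕ) (A : Fin ℓ → Fin n → ℕ) : Fin (n + 1) → ℕ :=
  fun k => if h : (k : ℕ) < n then colsum A ⟨k, h⟩ else n - ∑ i, d i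

lemma col0 (hℓ : 1 ≤ ℓ) {A : Fin ℓ → Fin n → ℕ} (hd : IsLDyck ℓ n A)
    (c : Fin n) (hc : (c : ℕ) = 0) : ∀ i, A i c = 0 := by
  have h1 := (isLDyck_iff hℓ A).1 hd c
  have h2 : colsum A c ≤ ∑ c' ∈ Finset.univ.filter (fun c' : Fin n => (c' : ℕ) ≤ (c : ℕ)),
      colsum A c' :=
    Finset.single_le_sum (fun _ _ => Nat.zero_le _)
      (by simp only [Finset.mem_filter, Finset.mem_univ, true_and, le_refl])
  have h3 : colsum A c = 0 := by omega
  intro i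
  have := (Finset.sum_eq_zero_iff.1 h3) i (Finset.mem_univ i)
  exact this

lemma total_colsum {A : Fin ℓ → Fin n → ℕ} {d : Fin ℓ → ℕ}
    (hrow : ∀ i, (∑ j, A i j) = d i) : ∑ c, colsum A c = ∑ i, d i := by
  unfold colsum
  rw [Finset.sum_comm]
  exact Finset.sum_congr rfl fun i _ => hrow i

lemma total_le (hn : 1 ≤ n) (hℓ : 1 ≤ ℓ) {A : Fin ℓ → Fin n → ℕ} {d : Fin ℓ → ℕ}
    (hrow : ∀ i, (∑ j, A i j) = d i) (hd : IsLDyck ℓ n A) : ∑ i, d i ≤ n - 1 := by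
  have h1 := (isLDyck_iff hℓ A).1 hd ⟨n - 1, by omega⟩
  have hfull : Finset.univ.filter (fun c : Fin n => (c : ℕ) ≤ ((⟨n - 1, by omega⟩ : Fin n) : ℕ))
      = Finset.univ := by
    ext c; simp only [Finset.mem_filter, Finset.mem_univ, true_and, iff_true]
    have := c.isLt; omega
  rw [hfull, total_colsum hrow] at h1
  exact h1

lemma mkEnc_castSucc (d : Fin ℓ → ℕ) (A : Fin ℓ → Fin n → ℕ) (c : Fin n) :
    mkEnc d A (Fin.castSucc c) = colsum A c := by
  simp only [mkEnc, Fin.coe_castSucc, c.isLt, dif_pos, Fin.eta]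

lemma mkEnc_mem (hn : 1 ≤ n) (hℓ : 1 ≤ ℓ) (d : Fin ℓ → ℕ) (A : Fin ℓ → Fin n → ℕ)
    (hrow : ∀ i, (∑ j, A i j) = d i) (hd : IsLDyck ℓ n A) :
    (∑ k, mkEnc d A k) = n ∧
    ∀ k : Fin (n + 1), (k : ℕ) < n →
      (∑ j ∈ Finset.univ.filter (fun j : Fin (n + 1) => j ≤ k), mkEnc d A j) ≤ (k : ℕ) := by
  constructor
  · rw [Fin.sum_univ_castSucc]
    have hlast : mkEnc d A (Fin.last n) = n - ∑ i, d i := by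
      simp only [mkEnc, Fin.val_last, lt_self_iff_false, dif_neg, not_false_iff]
    rw [hlast, Finset.sum_congr rfl (fun c _ => mkEnc_castSucc d A c), total_colsum hrow]
    have := total_le hn hℓ hrow hd
    omega
  · intro k hk
    have hfe : (Finset.univ.filter (fun j : Fin (n + 1) => j ≤ k))
        = Finset.univ.filter (fun j : Fin (n + 1) => (j : ℕ) ≤ (k : ℕ)) :=
      Finset.filter_congr (fun j _ => Fin.le_def)
    rw [hfe]
    have heq := sum_filter_le_eq (mkEnc d A) (colsum A) (k : ℕ) (by omega) hk
      (fun t ht h1 h2 => by simp only [mkEnc, dif_pos h2])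
    rw [heq]
    exact (isLDyck_iff hℓ A).1 hd ⟨k, hk⟩

lemma mkC_rowsum (d : Fin ℓ → ℕ) (A : Fin ℓ → Fin n → ℕ) (k : Fin (n - 1)) :
    (∑ j, mkC A k j) = mkEnc d A ⟨(k : ℕ) + 1, by have := k.isLt; omega⟩ := by
  have hk : (k : ℕ) + 1 < n := by have := k.isLt; omega
  simp only [mkC, mkEnc, hk, dif_pos]
  rfl

lemma mkC_colsum (hn : 1 ≤ n) (hℓ : 1 ≤ ℓ) {A : Fin ℓ → Fin n → ℕ} {d : Fin ℓ → ℕ}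
    (hrow : ∀ i, (∑ j, A i j) = d i) (hd : IsLDyck ℓ n A) (j : Fin ℓ) :
    (∑ k, mkC A k j) = d j := by
  have h0 : (fun c : Fin n => A j c) ⟨0, by omega⟩ = 0 :=
    col0 hℓ hd ⟨0, by omega⟩ rfl j
  have := sum_shift hn (fun c : Fin n => A j c) h0
  unfold mkC
  rw [← this]
  exact hrow j

lemma a0_eq_zero (hn : 1 ≤ n) {a : Fin (n + 1) → ℕ}
    (ha2 : ∀ k : Fin (n + 1), (k : ℕ) < n →
      (∑ j ∈ Finset.univ.filter (fun j : Fin (n + 1) => j ≤ k), a j) ≤ (k : ℕ))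
    (c : Fin (n + 1)) (hc : (c : ℕ) = 0) : a c = 0 := by
  have h1 := ha2 c (by omega)
  have h2 : a c ≤ ∑ j ∈ Finset.univ.filter (fun j : Fin (n + 1) => j ≤ c), a j :=
    Finset.single_le_sum (fun _ _ => Nat.zero_le _)
      (by simp only [Finset.mem_filter, Finset.mem_univ, true_and, le_refl])
  omega

lemma mkMat_colsum {a : Fin (n + 1) → ℕ} {C : Fin (n - 1) → Fin ℓ → ℕ}
    (hn : 1 ≤ n)
    (ha2 : ∀ k : Fin (n + 1), (k : ℕ) < n →
      (∑ j ∈ Finset.univ.filter (fun j : Fin (n + 1) => j ≤ k), a j) ≤ (k : ℕ))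
    (hC1 : ∀ k : Fin (n - 1),
      (∑ j, C k j) = a ⟨(k : ℕ) + 1, by have := k.isLt; omega⟩)
    (c : Fin n) : colsum (mkMat C) c = a ⟨(c : ℕ), by have := c.isLt; omega⟩ := by
  by_cases hc : 0 < (c : ℕ)
  · have hc1 : (c : ℕ) - 1 < n - 1 := by have := c.isLt; omega
    have : colsum (mkMat C) c = ∑ i, C ⟨(c : ℕ) - 1, hc1⟩ i := by
      unfold colsum mkMat
      refine Finset.sum_congr rfl fun i _ => ?_
      rw [dif_pos hc]
    rw [this, hC1 ⟨(c : ℕ) - 1, hc1⟩]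
    congr 1
    exact Fin.ext (by simp; omega)
  · have hc0 : (c : ℕ) = 0 := by omega
    have : colsum (mkMat C) c = 0 := by
      unfold colsum mkMat
      refine Finset.sum_eq_zero fun i _ => ?_
      rw [dif_neg (by omega)]
    rw [this, a0_eq_zero hn ha2 _ (by simpa using hc0)]

lemma mkMat_rowsum (hn : 1 ≤ n) {C : Fin (n - 1) → Fin ℓ → ℕ} {d : Fin ℓ → ℕ}
    (hC2 : ∀ j : Fin ℓ, (∑ k, C k j) = d j) (i : Fin ℓ) :
    (∑ j, mkMat C i j) = d i := by
  have h0 : (fun c : Fin n => mkMat C i c) ⟨0, by omega⟩ = 0 := by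
    simp [mkMat]
  rw [sum_shift hn (fun c : Fin n => mkMat C i c) h0, ← hC2 i]
  refine Finset.sum_congr rfl fun k _ => ?_
  simp only [mkMat]
  rw [dif_pos (by exact Nat.succ_pos _ : 0 < ((⟨(k : ℕ) + 1, by have := k.isLt; omega⟩ : Fin n) : ℕ))]
  congr 1

lemma mkMat_isLDyck (hn : 1 ≤ n) (hℓ : 1 ≤ ℓ) {a : Fin (n + 1) → ℕ}
    {C : Fin (n - 1) → Fin ℓ → ℕ}
    (ha2 : ∀ k : Fin (n + 1), (k : ℕ) < n →
      (∑ j ∈ Finset.univ.filter (fun j : Fin (n + 1) => j ≤ k), a j) ≤ (k : ℕ))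
    (hC1 : ∀ k : Fin (n - 1),
      (∑ j, C k j) = a ⟨(k : ℕ) + 1, by clear hn; have := k.isLt; omega⟩) :
    IsLDyck ℓ n (mkMat C) := by
  rw [isLDyck_iff hℓ]
  intro j
  have heq := sum_filter_le_eq (colsum (mkMat C)) a (j : ℕ) j.isLt (by have := j.isLt; omega)
    (fun t ht h1 h2 => by
      rw [mkMat_colsum hn ha2 hC1 ⟨t, h1⟩])
  rw [heq]
  have hfe : (Finset.univ.filter (fun c : Fin (n + 1) => (c : ℕ) ≤ (j : ℕ)))
      = Finset.univ.filter (fun c : Fin (n + 1) =>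
          c ≤ (⟨(j : ℕ), by have := j.isLt; omega⟩ : Fin (n + 1))) :=
    Finset.filter_congr (fun c _ => Iff.rfl)
  rw [hfe]
  exact ha2 ⟨(j : ℕ), by have := j.isLt; omega⟩ j.isLt

lemma mkMat_mkC (hℓ : 1 ≤ ℓ) {A : Fin ℓ → Fin n → ℕ} (hd : IsLDyck ℓ n A) :
    mkMat (mkC A) = A := by
  funext i j
  by_cases hj : 0 < (j : ℕ)
  · simp only [mkMat, mkC, dif_pos hj]
    congr 1
    exact Fin.ext (by simp; omega)
  · simp only [mkMat, dif_neg hj]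
    exact (col0 hℓ hd j (by omega) i).symm

lemma mkC_mkMat (C : Fin (n - 1) → Fin ℓ → ℕ) : mkC (mkMat C) = C := by
  funext k j
  simp only [mkC, mkMat]
  rw [dif_pos (by exact Nat.succ_pos _ : 0 < ((⟨(k : ℕ) + 1, by have := k.isLt; omega⟩ : Fin n) : ℕ))]
  congr 1

lemma mkEnc_mkMat (hn : 1 ≤ n) {a : Fin (n + 1) → ℕ} {C : Fin (n - 1) → Fin ℓ → ℕ}
    {d : Fin ℓ → ℕ}
    (ha1 : (∑ k, a k) = n)
    (ha2 : ∀ k : Fin (n + 1), (k : ℕ) < n →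
      (∑ j ∈ Finset.univ.filter (fun j : Fin (n + 1) => j ≤ k), a j) ≤ (k : ℕ))
    (hC1 : ∀ k : Fin (n - 1),
      (∑ j, C k j) = a ⟨(k : ℕ) + 1, by clear hn; have := k.isLt; omega⟩)
    (hC2 : ∀ j : Fin ℓ, (∑ k, C k j) = d j) :
    mkEnc d (mkMat C) = a := by
  have hcol : ∀ c : Fin n, colsum (mkMat C) c = a ⟨(c : ℕ), by have := c.isLt; omega⟩ :=
    mkMat_colsum hn ha2 hC1
  have hD : ∑ i, d i ≤ n ∧ a (Fin.last n) = n - ∑ i, d i := by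
    have h1 : ∑ c, colsum (mkMat C) c = ∑ i, d i :=
      total_colsum (mkMat_rowsum hn hC2)
    have h2 : (∑ k, a k) = (∑ c : Fin n, a (Fin.castSucc c)) + a (Fin.last n) :=
      Fin.sum_univ_castSucc a
    have h3 : ∀ c : Fin n, a (Fin.castSucc c) = colsum (mkMat C) c := by
      intro c
      rw [hcol c]
      congr 1
    rw [Finset.sum_congr rfl (fun c _ => h3 c), h1] at h2
    omega
  funext k
  by_cases hk : (k : ℕ) < n
  · simp only [mkEnc, dif_pos hk]
    rw [hcol ⟨k, hk⟩]
  · have hlast : k = Fin.last n := Fin.ext (by have := k.isLt; simp [Fin.val_last]; omega)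
    subst hlast
    simp only [mkEnc]
    rw [dif_neg (by simp : ¬ ((Fin.last n : ℕ) < n))]
    exact hD.2.symm

end Main

end S13

/-- The number of `ℓ×n` matrices `A` of nonnegative integers with row-sum
vector `d` such that `π(A)` is an `ℓ`-Dyck path equals the number of pairs `(β, C)` with `β`
a Dyck path of height `n` and `C` an `(n-1)×ℓ` matrix of nonnegative integers whose `k`-th
row sums to `a_k(β)` (`1 ≤ k ≤ n-1`) and whose `j`-th column sums to `d j`. -/
theorem statement13 (n ℓ : ℕ) (hn : 1 ≤ n) (hℓ : 1 ≤ ℓ) (d : Fin ℓ → ℕ) :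
    Nat.card {A : Fin ℓ → Fin n → ℕ //
        (∀ i : Fin ℓ, (∑ j, A i j) = d i) ∧ IsLDyck ℓ n A} =
      Nat.card {p : DyckEnc n × (Fin (n - 1) → Fin ℓ → ℕ) //
        (∀ k : Fin (n - 1),
          (∑ j, p.2 k j) = p.1.val ⟨(k : ℕ) + 1, by have := k.isLt; omega⟩) ∧
        (∀ j : Fin ℓ, (∑ k, p.2 k j) = d j)} := by
  refine Nat.card_congr
    { toFun := fun x =>
        ⟨⟨⟨S13.mkEnc d x.1, S13.mkEnc_mem hn hℓ d x.1 x.2.1 x.2.2⟩, S13.mkC x.1⟩,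
          fun k => S13.mkC_rowsum d x.1 k,
          fun j => S13.mkC_colsum hn hℓ x.2.1 x.2.2 j⟩
      invFun := fun y =>
        ⟨S13.mkMat y.1.2,
          S13.mkMat_rowsum hn y.2.2,
          S13.mkMat_isLDyck hn hℓ y.1.1.2.2 y.2.1⟩
      left_inv := fun x => Subtype.ext (S13.mkMat_mkC hℓ x.2.2)
      right_inv := fun y => Subtype.ext (Prod.ext
        (Subtype.ext (S13.mkEnc_mkMat hn y.1.1.2.1 y.1.1.2.2 y.2.1 y.2.2))
        (S13.mkC_mkMat y.1.2)) }

end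
end
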